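/- Suppose random variables $X, Z, \eta, \varepsilon$ satisfy $Z \perp \varepsilon \mid \eta$ and additionally $X$ is $\sigma(Z, \eta, \zeta)$-measurable with $\zeta \perp (Z, \varepsilon) \mid \eta$. Let $g$ be bounded measurable. Then for each fixed $x$, $\mathbb{E}[g(x,\varepsilon) \mid X, Z, \eta] = \mathbb{E}[g(x,\varepsilon) \mid \eta]$ almost surely, and hence $\mathbb{E}[g(x,\varepsilon) \mid X = x', Z = z] = \int \mathbb{E}[g(x,\varepsilon) \mid \eta = e] f_{\eta|XZ}(e \mid x', z) \, de$. -/

import Mathlib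

open MeasureTheory ProbabilityTheory

section Aux

variable {Ω : Type*} {m' mΩ : MeasurableSpace Ω} [StandardBorelSpace Ω]
  {μ : Measure Ω} [IsProbabilityMeasure μ]

/-- a.e. bound on the conditional expectation of an indicator. -/
lemma aux_condExp_indicator_bound (hm' : m' ≤ mΩ) (B : Set Ω) (hB : MeasurableSet[mΩ] B) :
    ∀ᵐ ω ∂μ, ‖(μ⟦B | m'⟧) ω‖ ≤ 1 := by
  have h0 : 0 ≤ᵐ[μ] μ⟦B | m'⟧ :=
    condExp_nonneg (Filter.Eventually.of_forall fun ω =>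
      Set.indicator_nonneg (fun _ _ => zero_le_one) ω)
  have h1 : μ⟦B | m'⟧ ≤ᵐ[μ] μ[(fun _ => (1:ℝ)) | m'] := by
    refine condExp_mono ((integrable_const (1:ℝ)).indicator hB) (integrable_const 1)
      (Filter.Eventually.of_forall fun ω => ?_)
    exact Set.indicator_le_self' (fun _ _ => zero_le_one) ω
  have hc : μ[(fun _ => (1:ℝ)) | m'] = fun _ => (1:ℝ) := condExp_const hm' 1
  filter_upwards [h0, h1] with ω h0ω h1ω
  rw [hc] at h1ω
  have h0ω' : (0:ℝ) ≤ (μ⟦B | m'⟧) ω := h0ω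
  have h1ω' : (μ⟦B | m'⟧) ω ≤ 1 := h1ω
  rw [Real.norm_eq_abs, abs_le]
  exact ⟨by linarith, h1ω'⟩

/-- Pull out an `m'`-measurable indicator from a conditional expectation of an indicator. -/
lemma aux_condExp_inter_indicator (hm' : m' ≤ mΩ) {B A : Set Ω}
    (hB : MeasurableSet[m'] B) (hA : MeasurableSet[mΩ] A) :
    (μ⟦B ∩ A | m'⟧) =ᵐ[μ] B.indicator (fun _ => (1:ℝ)) * (μ⟦A | m'⟧) := by
  have h1 : (B ∩ A).indicator (fun _ => (1:ℝ))
      = B.indicator (fun _ => (1:ℝ)) * A.indicator (fun _ => (1:ℝ)) := by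
    funext ω
    by_cases hb : ω ∈ B <;> by_cases ha : ω ∈ A <;>
      simp [Set.indicator, hb, ha]
  show μ[(B ∩ A).indicator (fun _ => (1:ℝ)) | m'] =ᵐ[μ] _
  rw [h1]
  refine condExp_stronglyMeasurable_mul_of_bound hm'
    (stronglyMeasurable_const.indicator hB) ((integrable_const (1:ℝ)).indicator hA) 1
    (Filter.Eventually.of_forall fun ω => ?_)
  by_cases hb : ω ∈ B <;> simp [Set.indicator, hb]

/-- Core computation: if the conditional product formula holds for `A`, `B`, then the
integral of `μ⟦B|m'⟧` over `A` is the measure of `A ∩ B`. -/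
lemma aux_setIntegral_condExp_eq (hm' : m' ≤ mΩ) {A B : Set Ω}
    (hA : MeasurableSet[mΩ] A) (hB : MeasurableSet[mΩ] B)
    (h : (μ⟦A ∩ B | m'⟧) =ᵐ[μ] fun ω => (μ⟦A | m'⟧) ω * (μ⟦B | m'⟧) ω) :
    ∫ ω in A, (μ⟦B | m'⟧) ω ∂μ = (μ (A ∩ B)).toReal := by
  have hindA : Integrable (A.indicator (fun _ => (1:ℝ))) μ := (integrable_const 1).indicator hA
  have hindAB : Integrable ((A ∩ B).indicator (fun _ => (1:ℝ))) μ :=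
    (integrable_const 1).indicator (hA.inter hB)
  -- RHS as an integral
  have hrhs : (μ (A ∩ B)).toReal = ∫ ω, (A ∩ B).indicator (fun _ => (1:ℝ)) ω ∂μ := by
    rw [integral_indicator (hA.inter hB), setIntegral_const, smul_eq_mul, mul_one, Measure.real_def]
  -- LHS as an integral of a product
  have hlhs : ∫ ω in A, (μ⟦B | m'⟧) ω ∂μ
      = ∫ ω, ((μ⟦B | m'⟧) * A.indicator (fun _ => (1:ℝ))) ω ∂μ := by
    rw [← integral_indicator hA]
    refine integral_congr_ae (Filter.Eventually.of_forall fun ω => ?_)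
    by_cases ha : ω ∈ A <;> simp [Set.indicator, ha]
  have hmul : μ[(μ⟦B | m'⟧) * A.indicator (fun _ => (1:ℝ)) | m']
      =ᵐ[μ] (μ⟦B | m'⟧) * (μ⟦A | m'⟧) :=
    condExp_stronglyMeasurable_mul_of_bound hm' stronglyMeasurable_condExp hindA 1
      (aux_condExp_indicator_bound hm' B hB)
  have hmul_int : Integrable ((μ⟦B | m'⟧) * A.indicator (fun _ => (1:ℝ))) μ := by
    refine Integrable.mono (integrable_condExp : Integrable (μ⟦B | m'⟧) μ)
      (((stronglyMeasurable_condExp.mono hm').mul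
        (stronglyMeasurable_const.indicator hA)).aestronglyMeasurable)
      (Filter.Eventually.of_forall fun ω => ?_)
    rw [Pi.mul_apply, norm_mul]
    by_cases ha : ω ∈ A <;> simp [Set.indicator, ha]
  calc ∫ ω in A, (μ⟦B | m'⟧) ω ∂μ
      = ∫ ω, ((μ⟦B | m'⟧) * A.indicator (fun _ => (1:ℝ))) ω ∂μ := hlhs
    _ = ∫ ω, (μ[(μ⟦B | m'⟧) * A.indicator (fun _ => (1:ℝ)) | m']) ω ∂μ :=
        (integral_condExp (f := (μ⟦B | m'⟧) * A.indicator (fun _ => (1:ℝ))) hm').symm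
    _ = ∫ ω, ((μ⟦B | m'⟧) * (μ⟦A | m'⟧)) ω ∂μ := integral_congr_ae hmul
    _ = ∫ ω, (μ⟦A ∩ B | m'⟧) ω ∂μ := by
        refine integral_congr_ae ?_
        filter_upwards [h] with ω hω
        rw [Pi.mul_apply, mul_comm, ← hω]
    _ = ∫ ω, (A ∩ B).indicator (fun _ => (1:ℝ)) ω ∂μ :=
        integral_condExp (f := (A ∩ B).indicator (fun _ => (1:ℝ))) hm'
    _ = (μ (A ∩ B)).toReal := hrhs.symm

/-- If `V ⟂ ε | m'` with `m' ≤ σ(V)`, then `E[f|σ(V)] = E[f|m']` for `σ(ε)`-measurable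
integrable `f`. -/
lemma aux_condExp_comap_eq_of_condIndepFun
    {𝒱 ℰ : Type*} [MeasurableSpace 𝒱] [MeasurableSpace ℰ]
    (hm' : m' ≤ mΩ) {V : Ω → 𝒱} {ε : Ω → ℰ} (hV : Measurable V) (hε : Measurable ε)
    (hle : m' ≤ MeasurableSpace.comap V inferInstance)
    (hindep : CondIndepFun m' hm' V ε μ)
    {f : Ω → ℝ} (hfm : Measurable[MeasurableSpace.comap ε inferInstance] f)
    (hfint : Integrable f μ) :
    μ[f | MeasurableSpace.comap V inferInstance] =ᵐ[μ] μ[f | m'] := by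
  have hVle : MeasurableSpace.comap V inferInstance ≤ mΩ := hV.comap_le
  have hEle : MeasurableSpace.comap ε inferInstance ≤ mΩ := hε.comap_le
  have hprod := (condIndepFun_iff_condExp_inter_preimage_eq_mul hV hε).mp hindep
  refine (ae_eq_condExp_of_forall_setIntegral_eq hVle hfint
    (fun s _ _ => integrable_condExp.integrableOn) (fun s hs _ => ?_)
    (stronglyMeasurable_condExp.mono hle).aestronglyMeasurable).symm
  obtain ⟨S, hS, rfl⟩ := hs
  have hA : MeasurableSet (V ⁻¹' S) := hV hS
  -- induction over σ(ε)-measurable L¹ functions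
  have key : ∀ ⦃u : Ω → ℝ⦄, MemLp u 1 μ →
      AEStronglyMeasurable[MeasurableSpace.comap ε inferInstance] u μ →
      ∫ ω in V ⁻¹' S, (μ[u | m']) ω ∂μ = ∫ ω in V ⁻¹' S, u ω ∂μ := by
    refine MemLp.induction_stronglyMeasurable hEle ENNReal.one_ne_top
      (fun u => ∫ ω in V ⁻¹' S, (μ[u | m']) ω ∂μ = ∫ ω in V ⁻¹' S, u ω ∂μ)
      ?_ ?_ ?_ ?_
    · -- indicators
      rintro c t ⟨T, hT, rfl⟩ -
      have hB : MeasurableSet (ε ⁻¹' T) := hε hT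
      have hcore := aux_setIntegral_condExp_eq hm' hA hB (hprod S T hS hT)
      have hind_eq : (ε ⁻¹' T).indicator (fun _ => c)
          = c • (ε ⁻¹' T).indicator (fun _ => (1:ℝ)) := by
        funext ω
        by_cases ht : ω ∈ ε ⁻¹' T <;> simp [Set.indicator, ht]
      rw [hind_eq]
      have hsmul := condExp_smul (μ := μ) (m := m') c
        ((ε ⁻¹' T).indicator (fun _ => (1:ℝ)))
      calc ∫ ω in V ⁻¹' S, (μ[c • (ε ⁻¹' T).indicator (fun _ => (1:ℝ)) | m']) ω ∂μ
          = ∫ ω in V ⁻¹' S, (c • (μ⟦ε ⁻¹' T | m'⟧)) ω ∂μ :=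
            integral_congr_ae (ae_restrict_of_ae hsmul)
        _ = c * ∫ ω in V ⁻¹' S, (μ⟦ε ⁻¹' T | m'⟧) ω ∂μ := by
            simp_rw [Pi.smul_apply, smul_eq_mul]
            exact integral_const_mul c _
        _ = c * (μ (V ⁻¹' S ∩ ε ⁻¹' T)).toReal := by rw [hcore]
        _ = c * ∫ _ω in V ⁻¹' S ∩ ε ⁻¹' T, (1:ℝ) ∂μ := by
            rw [setIntegral_const, smul_eq_mul, mul_one, Measure.real_def]
        _ = ∫ ω in V ⁻¹' S, (c • (ε ⁻¹' T).indicator (fun _ => (1:ℝ))) ω ∂μ := by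
            simp_rw [Pi.smul_apply, smul_eq_mul]
            rw [integral_const_mul, setIntegral_indicator hB]
    · -- additivity
      intro u v _ hu hv _ _ hPu hPv
      have hui : Integrable u μ := memLp_one_iff_integrable.mp hu
      have hvi : Integrable v μ := memLp_one_iff_integrable.mp hv
      calc ∫ ω in V ⁻¹' S, (μ[u + v | m']) ω ∂μ
          = ∫ ω in V ⁻¹' S, ((μ[u | m']) + (μ[v | m'])) ω ∂μ :=
            integral_congr_ae (ae_restrict_of_ae (condExp_add hui hvi m'))
        _ = (∫ ω in V ⁻¹' S, (μ[u | m']) ω ∂μ) + ∫ ω in V ⁻¹' S, (μ[v | m']) ω ∂μ := by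
            simp_rw [Pi.add_apply]
            exact integral_add integrable_condExp.integrableOn integrable_condExp.integrableOn
        _ = (∫ ω in V ⁻¹' S, u ω ∂μ) + ∫ ω in V ⁻¹' S, v ω ∂μ := by rw [hPu, hPv]
        _ = ∫ ω in V ⁻¹' S, (u + v) ω ∂μ := by
            simp_rw [Pi.add_apply]
            exact (integral_add hui.integrableOn hvi.integrableOn).symm
    · -- closedness
      have hfun_eq : (fun u : lpMeas ℝ ℝ (MeasurableSpace.comap ε inferInstance) 1 μ =>
            ∫ ω in V ⁻¹' S, (μ[(u : Ω → ℝ) | m']) ω ∂μ)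
          = fun u : lpMeas ℝ ℝ (MeasurableSpace.comap ε inferInstance) 1 μ =>
            ∫ ω in V ⁻¹' S, (condExpL1CLM ℝ hm' μ (↑u : Lp ℝ 1 μ)) ω ∂μ := by
        funext u
        refine integral_congr_ae (ae_restrict_of_ae ?_)
        have hint : Integrable ((↑u : Lp ℝ 1 μ) : Ω → ℝ) μ := L1.integrable_coeFn _
        have h := condExp_ae_eq_condExpL1CLM hm' hint
        rwa [Integrable.toL1_coeFn] at h
      have hcont1 : Continuous fun u : lpMeas ℝ ℝ (MeasurableSpace.comap ε inferInstance) 1 μ =>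
          ∫ ω in V ⁻¹' S, (condExpL1CLM ℝ hm' μ (↑u : Lp ℝ 1 μ)) ω ∂μ :=
        (continuous_setIntegral _).comp
          ((condExpL1CLM ℝ hm' μ).continuous.comp (Submodule.subtypeL _).continuous)
      have hcont2 : Continuous fun u : lpMeas ℝ ℝ (MeasurableSpace.comap ε inferInstance) 1 μ =>
          ∫ ω in V ⁻¹' S, (u : Ω → ℝ) ω ∂μ :=
        (continuous_setIntegral _).comp (Submodule.subtypeL _).continuous
      have : {u : lpMeas ℝ ℝ (MeasurableSpace.comap ε inferInstance) 1 μ |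
            ∫ ω in V ⁻¹' S, (μ[(u : Ω → ℝ) | m']) ω ∂μ = ∫ ω in V ⁻¹' S, (u : Ω → ℝ) ω ∂μ}
          = {u : lpMeas ℝ ℝ (MeasurableSpace.comap ε inferInstance) 1 μ |
              ∫ ω in V ⁻¹' S, (condExpL1CLM ℝ hm' μ (↑u : Lp ℝ 1 μ)) ω ∂μ
              = ∫ ω in V ⁻¹' S, (u : Ω → ℝ) ω ∂μ} := by
        ext u
        simp only [Set.mem_setOf_eq]
        rw [congrFun hfun_eq u]
      rw [this]
      exact isClosed_eq hcont1 hcont2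
    · -- stability under a.e. equality
      intro u v huv _ hPu
      calc ∫ ω in V ⁻¹' S, (μ[v | m']) ω ∂μ
          = ∫ ω in V ⁻¹' S, (μ[u | m']) ω ∂μ :=
            integral_congr_ae (ae_restrict_of_ae (condExp_congr_ae huv.symm))
        _ = ∫ ω in V ⁻¹' S, u ω ∂μ := hPu
        _ = ∫ ω in V ⁻¹' S, v ω ∂μ := integral_congr_ae (ae_restrict_of_ae huv)
  refine key (memLp_one_iff_integrable.mpr hfint) ?_
  exact (Measurable.stronglyMeasurable hfm).aestronglyMeasurable

/-- Combine `Z ⟂ ε | η` and `ζ ⟂ (Z,ε) | η` into `(Z,η,ζ) ⟂ ε | η`. -/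
lemma aux_combine_condIndepFun
    {𝒵 ℰ ℋ 𝒮 : Type*}
    [MeasurableSpace 𝒵] [MeasurableSpace ℰ] [MeasurableSpace ℋ] [MeasurableSpace 𝒮]
    {Z : Ω → 𝒵} {ε : Ω → ℰ} {η : Ω → ℋ} {ζ : Ω → 𝒮}
    (hZ : Measurable Z) (hε : Measurable ε) (hη : Measurable η) (hζ : Measurable ζ)
    (hZε : CondIndepFun (MeasurableSpace.comap η inferInstance) hη.comap_le Z ε μ)
    (hζZε : CondIndepFun (MeasurableSpace.comap η inferInstance) hη.comap_le
      ζ (fun ω => (Z ω, ε ω)) μ) :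
    CondIndepFun (MeasurableSpace.comap η inferInstance) hη.comap_le
      (fun ω => (Z ω, η ω, ζ ω)) ε μ := by
  have hm' : MeasurableSpace.comap η inferInstance ≤ mΩ := hη.comap_le
  set W : Ω → 𝒵 × ℋ × 𝒮 := fun ω => (Z ω, η ω, ζ ω) with hWdef
  have hWm : Measurable W := hZ.prodMk (hη.prodMk hζ)
  have hprod1 := (condIndepFun_iff_condExp_inter_preimage_eq_mul hZ hε).mp hZε
  have hprod2 := (condIndepFun_iff_condExp_inter_preimage_eq_mul hζ (hZ.prodMk hε)).mp hζZε
  set p1 : Set (Set Ω) := {s | ∃ C D S, MeasurableSet C ∧ MeasurableSet D ∧ MeasurableSet S ∧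
    s = Z ⁻¹' C ∩ η ⁻¹' D ∩ ζ ⁻¹' S} with hp1def
  set p2 : Set (Set Ω) := {t | ∃ T, MeasurableSet T ∧ t = ε ⁻¹' T} with hp2def
  have hp1m : ∀ s ∈ p1, MeasurableSet s := by
    rintro s ⟨C, D, S, hC, hD, hS, rfl⟩
    exact ((hZ hC).inter (hη hD)).inter (hζ hS)
  have hp2m : ∀ t ∈ p2, MeasurableSet t := by
    rintro t ⟨T, hT, rfl⟩
    exact hε hT
  have hpi1 : IsPiSystem p1 := by
    rintro s ⟨C, D, S, hC, hD, hS, rfl⟩ t ⟨C', D', S', hC', hD', hS', rfl⟩ -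
    refine ⟨C ∩ C', D ∩ D', S ∩ S', hC.inter hC', hD.inter hD', hS.inter hS', ?_⟩
    ext ω
    simp only [Set.mem_inter_iff, Set.mem_preimage]
    tauto
  have hpi2 : IsPiSystem p2 := by
    rintro s ⟨T, hT, rfl⟩ t ⟨T', hT', rfl⟩ -
    exact ⟨T ∩ T', hT.inter hT', by rw [Set.preimage_inter]⟩
  have hgen1 : MeasurableSpace.comap W inferInstance = MeasurableSpace.generateFrom p1 := by
    refine le_antisymm ?_ ?_
    · refine Measurable.comap_le ?_
      refine Measurable.prodMk ?_ (Measurable.prodMk ?_ ?_)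
      · intro C hC
        exact MeasurableSpace.measurableSet_generateFrom
          ⟨C, Set.univ, Set.univ, hC, MeasurableSet.univ, MeasurableSet.univ, by simp⟩
      · intro D hD
        exact MeasurableSpace.measurableSet_generateFrom
          ⟨Set.univ, D, Set.univ, MeasurableSet.univ, hD, MeasurableSet.univ, by simp⟩
      · intro S hS
        exact MeasurableSpace.measurableSet_generateFrom
          ⟨Set.univ, Set.univ, S, MeasurableSet.univ, MeasurableSet.univ, hS, by simp⟩
    · refine MeasurableSpace.generateFrom_le ?_
      rintro s ⟨C, D, S, hC, hD, hS, rfl⟩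
      refine ⟨C ×ˢ D ×ˢ S, (hC.prod (hD.prod hS)), ?_⟩
      ext ω
      simp only [Set.mem_preimage, Set.mem_prod, Set.mem_inter_iff, hWdef]
      tauto
  have hgen2 : MeasurableSpace.comap ε inferInstance = MeasurableSpace.generateFrom p2 := by
    refine le_antisymm ?_ ?_
    · refine Measurable.comap_le ?_
      intro T hT
      exact MeasurableSpace.measurableSet_generateFrom ⟨T, hT, rfl⟩
    · refine MeasurableSpace.generateFrom_le ?_
      rintro s ⟨T, hT, rfl⟩
      exact ⟨T, hT, rfl⟩
  rw [condIndepFun_iff_condIndep]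
  refine CondIndepSets.condIndep hWm.comap_le hε.comap_le hpi1 hpi2 hgen1 hgen2 ?_
  refine (condIndepSets_iff _ _ p1 p2 hp1m hp2m μ).mpr ?_
  rintro t1 t2 ⟨C, D, S, hC, hD, hS, rfl⟩ ⟨T, hT, rfl⟩
  have hDm' : MeasurableSet[(MeasurableSpace.comap η inferInstance)] (η ⁻¹' D) := ⟨D, hD, rfl⟩
  have e1 : (μ⟦ζ ⁻¹' S ∩ (Z ⁻¹' C ∩ ε ⁻¹' T) | (MeasurableSpace.comap η inferInstance)⟧)
      =ᵐ[μ] fun ω => (μ⟦ζ ⁻¹' S | (MeasurableSpace.comap η inferInstance)⟧) ω * (μ⟦Z ⁻¹' C ∩ ε ⁻¹' T | (MeasurableSpace.comap η inferInstance)⟧) ω := by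
    have h := hprod2 S (C ×ˢ T) hS (hC.prod hT)
    rwa [Set.mk_preimage_prod] at h
  have e1' : (μ⟦ζ ⁻¹' S ∩ Z ⁻¹' C | (MeasurableSpace.comap η inferInstance)⟧)
      =ᵐ[μ] fun ω => (μ⟦ζ ⁻¹' S | (MeasurableSpace.comap η inferInstance)⟧) ω * (μ⟦Z ⁻¹' C | (MeasurableSpace.comap η inferInstance)⟧) ω := by
    have h := hprod2 S (C ×ˢ Set.univ) hS (hC.prod MeasurableSet.univ)
    rwa [Set.mk_preimage_prod, Set.preimage_univ, Set.inter_univ] at h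
  have e2 := hprod1 C T hC hT
  have e3 : (μ⟦η ⁻¹' D ∩ (ζ ⁻¹' S ∩ (Z ⁻¹' C ∩ ε ⁻¹' T)) | (MeasurableSpace.comap η inferInstance)⟧)
      =ᵐ[μ] (η ⁻¹' D).indicator (fun _ => (1:ℝ))
        * (μ⟦ζ ⁻¹' S ∩ (Z ⁻¹' C ∩ ε ⁻¹' T) | (MeasurableSpace.comap η inferInstance)⟧) :=
    aux_condExp_inter_indicator hm' hDm'
      ((hζ hS).inter ((hZ hC).inter (hε hT)))
  have e4 : (μ⟦η ⁻¹' D ∩ (ζ ⁻¹' S ∩ Z ⁻¹' C) | (MeasurableSpace.comap η inferInstance)⟧)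
      =ᵐ[μ] (η ⁻¹' D).indicator (fun _ => (1:ℝ)) * (μ⟦ζ ⁻¹' S ∩ Z ⁻¹' C | (MeasurableSpace.comap η inferInstance)⟧) :=
    aux_condExp_inter_indicator hm' hDm' ((hζ hS).inter (hZ hC))
  have hset1 : Z ⁻¹' C ∩ η ⁻¹' D ∩ ζ ⁻¹' S ∩ ε ⁻¹' T
      = η ⁻¹' D ∩ (ζ ⁻¹' S ∩ (Z ⁻¹' C ∩ ε ⁻¹' T)) := by
    ext ω
    simp only [Set.mem_inter_iff, Set.mem_preimage]
    tauto
  have hset2 : Z ⁻¹' C ∩ η ⁻¹' D ∩ ζ ⁻¹' S = η ⁻¹' D ∩ (ζ ⁻¹' S ∩ Z ⁻¹' C) := by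
    ext ω
    simp only [Set.mem_inter_iff, Set.mem_preimage]
    tauto
  rw [hset1, hset2]
  filter_upwards [e1, e1', e2, e3, e4] with ω h1 h2 h3 h4 h5
  simp only [Pi.mul_apply] at h4 h5 ⊢
  rw [h4, h5, h1, h2, h3]
  ring

end Aux

/-- Conditional-independence step in the multi-valued treatment model
`Y = g(X,ε)`, `X = h(Z,η,ζ)` with `ζ ⟂ (Z,ε) | η` and `Z ⟂ ε | η`:
for each fixed `x`, `E[g(x,ε) | X,Z,η] = E[g(x,ε) | η]` a.s., and hence
`E[g(x,ε) | X,Z] = E[ E[g(x,ε) | η] | X,Z ]` a.s. (the integral against the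
conditional distribution of `η` given `(X,Z)`). -/
theorem multivalued_treatment_cond_indep_step
    {Ω 𝒳 𝒵 ℰ ℋ 𝒮 : Type*} [MeasurableSpace Ω] [StandardBorelSpace Ω]
    [MeasurableSpace 𝒳] [MeasurableSpace 𝒵] [MeasurableSpace ℰ]
    [MeasurableSpace ℋ] [MeasurableSpace 𝒮]
    (μ : Measure Ω) [IsProbabilityMeasure μ]
    (X : Ω → 𝒳) (Z : Ω → 𝒵) (ε : Ω → ℰ) (η : Ω → ℋ) (ζ : Ω → 𝒮)
    (hX : Measurable X) (hZ : Measurable Z) (hε : Measurable ε)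
    (hη : Measurable η) (hζ : Measurable ζ)
    -- Z ⟂ ε | η
    (hZε : CondIndepFun (MeasurableSpace.comap η inferInstance) hη.comap_le Z ε μ)
    -- ζ ⟂ (Z,ε) | η
    (hζZε : CondIndepFun (MeasurableSpace.comap η inferInstance) hη.comap_le
      ζ (fun ω => (Z ω, ε ω)) μ)
    -- X is a measurable function of (Z,η,ζ)
    (hXfun : ∃ φ : 𝒵 × ℋ × 𝒮 → 𝒳, Measurable φ ∧ ∀ ω, X ω = φ (Z ω, η ω, ζ ω))
    (g : 𝒳 → ℰ → ℝ) (hg : Measurable (fun p : 𝒳 × ℰ => g p.1 p.2))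
    (hgb : ∃ M, ∀ x e, |g x e| ≤ M)
    (x : 𝒳) :
    (μ[fun ω => g x (ε ω) | MeasurableSpace.comap (fun ω => (X ω, Z ω, η ω)) inferInstance]
        =ᵐ[μ] μ[fun ω => g x (ε ω) | MeasurableSpace.comap η inferInstance]) ∧
    (μ[fun ω => g x (ε ω) | MeasurableSpace.comap (fun ω => (X ω, Z ω)) inferInstance]
        =ᵐ[μ] μ[μ[fun ω => g x (ε ω) | MeasurableSpace.comap η inferInstance]
            | MeasurableSpace.comap (fun ω => (X ω, Z ω)) inferInstance]) := by
  obtain ⟨φ, hφ, hXeq⟩ := hXfun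
  obtain ⟨M, hM⟩ := hgb
  have hm' : MeasurableSpace.comap η inferInstance ≤ ‹MeasurableSpace Ω› := hη.comap_le
  -- basic facts about f := fun ω => g x (ε ω)
  have hgx : Measurable (g x) := hg.comp measurable_prodMk_left
  have hfm : Measurable (fun ω => g x (ε ω)) := hgx.comp hε
  have hfmE : Measurable[MeasurableSpace.comap ε inferInstance] (fun ω => g x (ε ω)) :=
    hgx.comp (Measurable.of_comap_le le_rfl)
  have hfint : Integrable (fun ω => g x (ε ω)) μ := by
    refine (integrable_const M).mono' hfm.aestronglyMeasurable
      (Filter.Eventually.of_forall fun ω => ?_)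
    simpa [Real.norm_eq_abs] using hM x (ε ω)
  -- conditional independence of (X,Z,η) and ε given η
  have hWε := aux_combine_condIndepFun hZ hε hη hζ hZε hζZε
  have hVm : Measurable (fun ω => (X ω, Z ω, η ω)) := hX.prodMk (hZ.prodMk hη)
  have hVW : (fun ω => (X ω, Z ω, η ω))
      = (fun p : 𝒵 × ℋ × 𝒮 => (φ p, p.1, p.2.1)) ∘ (fun ω => (Z ω, η ω, ζ ω)) := by
    funext ω
    simp [Function.comp, hXeq ω]
  have hVε : CondIndepFun (MeasurableSpace.comap η inferInstance) hη.comap_le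
      (fun ω => (X ω, Z ω, η ω)) ε μ := by
    rw [hVW]
    exact hWε.comp (hφ.prodMk (measurable_fst.prodMk (measurable_fst.comp measurable_snd)))
      measurable_id
  -- σ(η) ≤ σ(X,Z,η)
  have hleη : MeasurableSpace.comap η inferInstance
      ≤ MeasurableSpace.comap (fun ω => (X ω, Z ω, η ω)) inferInstance := by
    have : η = (fun q : 𝒳 × 𝒵 × ℋ => q.2.2) ∘ (fun ω => (X ω, Z ω, η ω)) := rfl
    rw [this, ← MeasurableSpace.comap_comp]
    exact MeasurableSpace.comap_mono (measurable_snd.snd).comap_le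
  -- part 1
  have h1 : μ[fun ω => g x (ε ω)
        | MeasurableSpace.comap (fun ω => (X ω, Z ω, η ω)) inferInstance]
      =ᵐ[μ] μ[fun ω => g x (ε ω) | MeasurableSpace.comap η inferInstance] :=
    aux_condExp_comap_eq_of_condIndepFun hm' hVm hε hleη hVε hfmE hfint
  refine ⟨h1, ?_⟩
  -- σ(X,Z) ≤ σ(X,Z,η)
  have hle2 : MeasurableSpace.comap (fun ω => (X ω, Z ω)) inferInstance
      ≤ MeasurableSpace.comap (fun ω => (X ω, Z ω, η ω)) inferInstance := by
    have : (fun ω => (X ω, Z ω))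
        = (fun q : 𝒳 × 𝒵 × ℋ => (q.1, q.2.1)) ∘ (fun ω => (X ω, Z ω, η ω)) := rfl
    rw [this, ← MeasurableSpace.comap_comp]
    exact MeasurableSpace.comap_mono (measurable_fst.prodMk (measurable_fst.comp
      measurable_snd)).comap_le
  have h2 := condExp_condExp_of_le (μ := μ) (f := fun ω => g x (ε ω)) hle2 hVm.comap_le
  exact h2.symm.trans (condExp_congr_ae h1)
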